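/- With $N \geq 2$, $k = \cos(\pi/(2N))$, $f = (1-k)/(1+k)$, $l = 1/(1+k)$, the block matrix $Z_N^* = \begin{pmatrix} N/l & -e_{4N}^T \\ -e_{4N} & M_N \end{pmatrix}$ of size $(4N+1) \times (4N+1)$ is positive semidefinite, where $M_N = l \cdot A_{C_{4N}} + \begin{pmatrix} I_{2N} & f I_{2N} \\ f I_{2N} & I_{2N} \end{pmatrix}$ and $e_{4N}$ is the all-ones vector. -/

import Mathlib

theorem cosSum (n : ℕ) (hn : 0 < n) (d : ℤ) :
    ∑ m ∈ Finset.range n, Real.cos (2 * Real.pi / n * (m * d)) =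
      if (n : ℤ) ∣ d then (n : ℝ) else 0 := by
  have hn' : (n : ℝ) ≠ 0 := Nat.cast_ne_zero.mpr hn.ne'
  by_cases hd : (n : ℤ) ∣ d
  · obtain ⟨c, rfl⟩ := hd
    rw [if_pos ⟨c, rfl⟩]
    have : ∀ m ∈ Finset.range n, Real.cos (2 * Real.pi / n * (m * ((((n : ℤ) * c : ℤ)) : ℝ))) = 1 := by
      intro m _
      have harg : (2 * Real.pi / n * (m * ((((n : ℤ) * c : ℤ)) : ℝ)) : ℝ)
          = ((m * c : ℤ) : ℝ) * (2 * Real.pi) := by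
        push_cast
        field_simp
      rw [harg, Real.cos_int_mul_two_pi]
    rw [Finset.sum_congr rfl this]
    simp
  · rw [if_neg hd]
    have hnc : (n : ℂ) ≠ 0 := Nat.cast_ne_zero.mpr hn.ne'
    set z : ℂ := Complex.exp ((2 * Real.pi / n * d : ℝ) * Complex.I) with hzdef
    have hzm : ∀ m : ℕ, z ^ m = Complex.exp (((2 * Real.pi / n * (m * d) : ℝ) : ℂ) * Complex.I) := by
      intro m
      rw [hzdef, ← Complex.exp_nat_mul]
      congr 1
      push_cast
      ring
    have hzn : z ^ n = 1 := by
      rw [hzm n]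
      have : (((2 * Real.pi / n * (n * d) : ℝ) : ℂ) * Complex.I) = (d : ℤ) * (2 * Real.pi * Complex.I) := by
        push_cast
        field_simp
      rw [this, Complex.exp_int_mul_two_pi_mul_I]
    have hz1 : z ≠ 1 := by
      intro h
      rw [hzdef, Complex.exp_eq_one_iff] at h
      obtain ⟨c, hc⟩ := h
      have hc' : ((2 * Real.pi / n * d : ℝ) : ℂ) * Complex.I = ((c * (2 * Real.pi) : ℝ) : ℂ) * Complex.I := by
        rw [hc]; push_cast; ring
      have hre : (2 * Real.pi / n * d : ℝ) = (c * (2 * Real.pi) : ℝ) :=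
        Complex.ofReal_injective (mul_right_cancel₀ Complex.I_ne_zero hc')
      field_simp at hre
      have h2 : (2 * Real.pi) * (d : ℝ) = (2 * Real.pi) * ((c * n : ℤ) : ℝ) := by
        push_cast
        rw [hre]; ring
      have h3 : (d : ℝ) = ((c * n : ℤ) : ℝ) :=
        mul_left_cancel₀ (by positivity) h2
      have : d = c * n := by exact_mod_cast h3
      exact hd ⟨c, by rw [this]; ring⟩
    have hsum : ∑ m ∈ Finset.range n, z ^ m = 0 := by
      rw [geom_sum_eq hz1, hzn]
      simp
    have : ∑ m ∈ Finset.range n, Real.cos (2 * Real.pi / n * (m * d))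
        = (∑ m ∈ Finset.range n, z ^ m).re := by
      rw [Complex.re_sum]
      refine Finset.sum_congr rfl fun m _ => ?_
      rw [hzm m, Complex.exp_ofReal_mul_I_re]
    rw [this, hsum]
    simp


theorem dvd_iff_aux (K : ℕ) (hK : 0 < K) (e : ℤ) (h1 : -(2 * K) < e) (h2 : e < 2 * K) :
    ((K : ℤ) ∣ e ↔ e = -K ∨ e = 0 ∨ e = K) := by
  constructor
  · rintro ⟨c, rfl⟩
    have hK' : (0 : ℤ) < K := by exact_mod_cast hK
    have hc0 : -2 < c := by nlinarith
    have hc1 : c < 2 := by nlinarith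
    interval_cases c <;> simp
  · rintro (rfl | rfl | rfl) <;> simp


noncomputable def kCE (N : ℕ) : ℝ := Real.cos (Real.pi / (2 * N))
noncomputable def fCE (N : ℕ) : ℝ := (1 - kCE N) / (1 + kCE N)
noncomputable def lCE (N : ℕ) : ℝ := 1 / (1 + kCE N)
noncomputable def bCE (N : ℕ) : ℝ := 2 * Real.pi / ((4 * N : ℕ) : ℝ)
noncomputable def lamCE (N : ℕ) (m : ℕ) : ℝ :=
  2 * lCE N * Real.cos (bCE N * m) + 1 + fCE N * Real.cos (bCE N * ((2 * N * m : ℕ) : ℝ))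

lemma kCE_nonneg (N : ℕ) (hN : 1 ≤ N) : 0 ≤ kCE N := by
  have hN' : (1 : ℝ) ≤ N := by exact_mod_cast hN
  have hpi := Real.pi_pos
  apply Real.cos_nonneg_of_mem_Icc
  constructor
  · have : 0 ≤ Real.pi / (2 * (N:ℝ)) := by positivity
    linarith
  · rw [div_le_div_iff₀ (by positivity) (by norm_num)]
    nlinarith

lemma kCE_le_one (N : ℕ) : kCE N ≤ 1 := Real.cos_le_one _

lemma one_add_kCE_pos (N : ℕ) (hN : 1 ≤ N) : 0 < 1 + kCE N := by
  have := kCE_nonneg N hN; linarith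

lemma lCE_pos (N : ℕ) (hN : 1 ≤ N) : 0 < lCE N := by
  have := one_add_kCE_pos N hN
  rw [lCE]; positivity

lemma fCE_nonneg (N : ℕ) (hN : 1 ≤ N) : 0 ≤ fCE N := by
  have h1 := one_add_kCE_pos N hN
  have h2 := kCE_le_one N
  rw [fCE]
  apply div_nonneg <;> linarith

lemma one_add_fCE (N : ℕ) (hN : 1 ≤ N) : 1 + fCE N = 2 * lCE N := by
  have h1 := one_add_kCE_pos N hN
  rw [fCE, lCE]
  field_simp
  ring

lemma one_sub_fCE (N : ℕ) (hN : 1 ≤ N) : 1 - fCE N = 2 * kCE N * lCE N := by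
  have h1 := one_add_kCE_pos N hN
  rw [fCE, lCE]
  field_simp
  ring

lemma bCE_mul_N (N : ℕ) (hN : 1 ≤ N) : bCE N * N = Real.pi / 2 := by
  have hN' : (0 : ℝ) < N := by exact_mod_cast hN
  rw [bCE]; push_cast; field_simp; ring

lemma bCE_mul_two_N (N : ℕ) (hN : 1 ≤ N) : bCE N * (2 * N) = Real.pi := by
  have hN' : (0 : ℝ) < N := by exact_mod_cast hN
  rw [bCE]; push_cast; field_simp; ring

lemma bCE_pos (N : ℕ) (hN : 1 ≤ N) : 0 < bCE N := by
  have hN' : (0 : ℝ) < N := by exact_mod_cast hN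
  have := Real.pi_pos
  rw [bCE]; push_cast; positivity

lemma kCE_eq_cos_bCE (N : ℕ) (hN : 1 ≤ N) : kCE N = Real.cos (bCE N) := by
  have hN' : (0 : ℝ) < N := by exact_mod_cast hN
  rw [kCE, bCE]
  congr 1
  push_cast
  field_simp
  ring

lemma cos_pm_one (N : ℕ) (hN : 1 ≤ N) (m : ℕ) :
    Real.cos (bCE N * ((2 * N * m : ℕ) : ℝ)) = (-1 : ℝ) ^ m := by
  have harg : bCE N * ((2 * N * m : ℕ) : ℝ) = m * Real.pi := by
    have h := bCE_mul_two_N N hN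
    push_cast
    push_cast at h
    nlinarith [h]
  rw [harg]
  rcases Nat.even_or_odd m with ⟨t, ht⟩ | ⟨t, ht⟩
  · subst ht
    have : ((t + t : ℕ) : ℝ) * Real.pi = (t : ℤ) * (2 * Real.pi) := by push_cast; ring
    rw [this, Real.cos_int_mul_two_pi]
    rw [Even.neg_one_pow ⟨t, rfl⟩]
  · subst ht
    have : ((2 * t + 1 : ℕ) : ℝ) * Real.pi = (t : ℤ) * (2 * Real.pi) + Real.pi := by push_cast; ring
    rw [this, Real.cos_add, Real.cos_int_mul_two_pi]
    rw [Odd.neg_one_pow ⟨t, by ring⟩]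
    simp [Real.cos_pi, Real.sin_pi]

lemma lamCE_nonneg (N : ℕ) (hN : 1 ≤ N) (m : ℕ) (hm : m < 4 * N) : 0 ≤ lamCE N m := by
  have hl := lCE_pos N hN
  have hb := bCE_pos N hN
  have hpi := Real.pi_pos
  rw [lamCE, cos_pm_one N hN m]
  rcases Nat.even_or_odd m with ⟨t, ht⟩ | ⟨t, ht⟩
  · -- even case
    rw [Even.neg_one_pow ⟨t, ht⟩]
    have h1 := one_add_fCE N hN
    have h2 := Real.neg_one_le_cos (bCE N * m)
    nlinarith
  · -- odd case
    rw [Odd.neg_one_pow ⟨t, by omega⟩]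
    have h1 := one_sub_fCE N hN
    -- cos (bCE N * m) + kCE N ≥ 0
    have hsplit : Real.cos (bCE N * m) + kCE N
        = 2 * Real.cos (bCE N * (t + 1)) * Real.cos (bCE N * t) := by
      rw [kCE_eq_cos_bCE N hN, Real.cos_add_cos]
      have e1 : (bCE N * m + bCE N) / 2 = bCE N * (t + 1) := by subst ht; push_cast; ring
      have e2 : (bCE N * m - bCE N) / 2 = bCE N * t := by subst ht; push_cast; ring
      rw [e1, e2]
    have ht2 : t + 1 ≤ 2 * N := by omega
    have hprod : 0 ≤ Real.cos (bCE N * (t + 1)) * Real.cos (bCE N * t) := by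
      rcases le_or_gt (t + 1) N with hcase | hcase
      · apply mul_nonneg <;>
        · apply Real.cos_nonneg_of_mem_Icc
          constructor
          · nlinarith [mul_nonneg hb.le (by positivity : (0:ℝ) ≤ (t:ℝ)),
              mul_nonneg hb.le (by positivity : (0:ℝ) ≤ (t:ℝ) + 1)]
          · have hc : ((t : ℝ) + 1) ≤ N := by exact_mod_cast hcase
            have hc2 : (t : ℝ) ≤ N := by linarith
            have := bCE_mul_N N hN
            nlinarith [mul_le_mul_of_nonneg_left hc hb.le,
              mul_le_mul_of_nonneg_left hc2 hb.le]
      · have hNt : (N : ℝ) ≤ t := by exact_mod_cast (by omega : N ≤ t)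
        have hup : ((t : ℝ) + 1) ≤ 2 * N := by exact_mod_cast ht2
        have hN2 := bCE_mul_N N hN
        have h2N := bCE_mul_two_N N hN
        have hc1 : Real.cos (bCE N * (t + 1)) ≤ 0 := by
          apply Real.cos_nonpos_of_pi_div_two_le_of_le
          · nlinarith [mul_le_mul_of_nonneg_left hNt hb.le]
          · nlinarith [mul_le_mul_of_nonneg_left hup hb.le]
        have hc2 : Real.cos (bCE N * t) ≤ 0 := by
          apply Real.cos_nonpos_of_pi_div_two_le_of_le
          · nlinarith [mul_le_mul_of_nonneg_left hNt hb.le]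
          · nlinarith [mul_le_mul_of_nonneg_left hup hb.le]
        nlinarith [mul_nonneg (neg_nonneg.mpr hc1) (neg_nonneg.mpr hc2)]
    nlinarith [hsplit, hprod]


noncomputable def Ment (N : ℕ) (i j : Fin (4 * N)) : ℝ :=
  lCE N * (if (i.val + 1) % (4 * N) = j.val ∨ (j.val + 1) % (4 * N) = i.val then 1 else 0)
    + (if i = j then (1:ℝ) else if i.val % (2 * N) = j.val % (2 * N) then fCE N else 0)

lemma prod_ident (N : ℕ) (hN : 1 ≤ N) (m : ℕ) (d : ℤ) :
    lamCE N m * Real.cos (bCE N * (m * (d : ℝ))) =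
      lCE N * Real.cos (bCE N * (m * ((d + 1 : ℤ) : ℝ)))
      + lCE N * Real.cos (bCE N * (m * ((d - 1 : ℤ) : ℝ)))
      + Real.cos (bCE N * (m * (d : ℝ)))
      + fCE N / 2 * Real.cos (bCE N * (m * ((d + 2 * N : ℤ) : ℝ)))
      + fCE N / 2 * Real.cos (bCE N * (m * ((d - 2 * N : ℤ) : ℝ))) := by
  have e1 : bCE N * (m * ((d + 1 : ℤ) : ℝ)) = bCE N * (m * (d : ℝ)) + bCE N * m := by
    push_cast; ring
  have e2 : bCE N * (m * ((d - 1 : ℤ) : ℝ)) = bCE N * (m * (d : ℝ)) - bCE N * m := by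
    push_cast; ring
  have e3 : bCE N * (m * ((d + 2 * N : ℤ) : ℝ))
      = bCE N * (m * (d : ℝ)) + bCE N * ((2 * N * m : ℕ) : ℝ) := by push_cast; ring
  have e4 : bCE N * (m * ((d - 2 * N : ℤ) : ℝ))
      = bCE N * (m * (d : ℝ)) - bCE N * ((2 * N * m : ℕ) : ℝ) := by push_cast; ring
  rw [e1, e2, e3, e4, Real.cos_add, Real.cos_sub, Real.cos_add, Real.cos_sub, lamCE]
  ring

lemma sumS (N : ℕ) (hN : 1 ≤ N) (e : ℤ) :
    ∑ m ∈ Finset.range (4 * N), Real.cos (bCE N * (m * (e : ℝ)))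
      = if ((4 * N : ℕ) : ℤ) ∣ e then ((4 * N : ℕ) : ℝ) else 0 := by
  have := cosSum (4 * N) (by omega) e
  simpa [bCE] using this

set_option maxHeartbeats 1000000 in
lemma keyCE (N : ℕ) (hN : 2 ≤ N) (i j : Fin (4 * N)) :
    ∑ m ∈ Finset.range (4 * N),
        lamCE N m * Real.cos (bCE N * (m * (((i.val : ℤ) - (j.val : ℤ) : ℤ) : ℝ))) =
      ((4 * N : ℕ) : ℝ) * Ment N i j := by
  rw [Ment]
  have hN1 : 1 ≤ N := by omega
  have hi := i.isLt
  have hj := j.isLt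
  set d : ℤ := (i.val : ℤ) - (j.val : ℤ) with hd
  obtain ⟨ai, hai, hai2⟩ : ∃ c, (i.val + 1) % (4 * N) = c ∧
      ((i.val + 1 < 4 * N ∧ c = i.val + 1) ∨ (i.val + 1 = 4 * N ∧ c = 0)) := by
    rcases Nat.lt_or_ge (i.val + 1) (4 * N) with h | h
    · exact ⟨i.val + 1, Nat.mod_eq_of_lt h, Or.inl ⟨h, rfl⟩⟩
    · have h4 : i.val + 1 = 4 * N := by omega
      exact ⟨0, by rw [h4, Nat.mod_self], Or.inr ⟨h4, rfl⟩⟩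
  obtain ⟨aj, haj, haj2⟩ : ∃ c, (j.val + 1) % (4 * N) = c ∧
      ((j.val + 1 < 4 * N ∧ c = j.val + 1) ∨ (j.val + 1 = 4 * N ∧ c = 0)) := by
    rcases Nat.lt_or_ge (j.val + 1) (4 * N) with h | h
    · exact ⟨j.val + 1, Nat.mod_eq_of_lt h, Or.inl ⟨h, rfl⟩⟩
    · have h4 : j.val + 1 = 4 * N := by omega
      exact ⟨0, by rw [h4, Nat.mod_self], Or.inr ⟨h4, rfl⟩⟩
  obtain ⟨mi, hmi, hmi2⟩ : ∃ c, i.val % (2 * N) = c ∧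
      ((i.val < 2 * N ∧ c = i.val) ∨ (2 * N ≤ i.val ∧ c + 2 * N = i.val)) := by
    rcases Nat.lt_or_ge i.val (2 * N) with h | h
    · exact ⟨i.val, Nat.mod_eq_of_lt h, Or.inl ⟨h, rfl⟩⟩
    · refine ⟨i.val - 2 * N, ?_, Or.inr ⟨h, by omega⟩⟩
      rw [Nat.mod_eq_sub_mod h, Nat.mod_eq_of_lt (by omega)]
  obtain ⟨mj, hmj, hmj2⟩ : ∃ c, j.val % (2 * N) = c ∧
      ((j.val < 2 * N ∧ c = j.val) ∨ (2 * N ≤ j.val ∧ c + 2 * N = j.val)) := by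
    rcases Nat.lt_or_ge j.val (2 * N) with h | h
    · exact ⟨j.val, Nat.mod_eq_of_lt h, Or.inl ⟨h, rfl⟩⟩
    · refine ⟨j.val - 2 * N, ?_, Or.inr ⟨h, by omega⟩⟩
      rw [Nat.mod_eq_sub_mod h, Nat.mod_eq_of_lt (by omega)]
  -- rewrite LHS
  rw [Finset.sum_congr rfl (fun m _ => prod_ident N hN1 m d)]
  rw [Finset.sum_add_distrib, Finset.sum_add_distrib, Finset.sum_add_distrib,
    Finset.sum_add_distrib, ← Finset.mul_sum, ← Finset.mul_sum, ← Finset.mul_sum, ← Finset.mul_sum]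
  rw [sumS N hN1 (d + 1), sumS N hN1 (d - 1), sumS N hN1 d,
    sumS N hN1 (d + 2 * N), sumS N hN1 (d - 2 * N)]
  have hc1 : (((4 * N : ℕ) : ℤ) ∣ d + 1) ↔ ai = j.val := by
    rw [dvd_iff_aux (4 * N) (by omega) (d + 1) (by omega) (by omega)]; omega
  have hc2 : (((4 * N : ℕ) : ℤ) ∣ d - 1) ↔ aj = i.val := by
    rw [dvd_iff_aux (4 * N) (by omega) (d - 1) (by omega) (by omega)]; omega
  have hc0 : (((4 * N : ℕ) : ℤ) ∣ d) ↔ i.val = j.val := by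
    rw [dvd_iff_aux (4 * N) (by omega) d (by omega) (by omega)]; omega
  have hc3 : (((4 * N : ℕ) : ℤ) ∣ d + 2 * N) ↔ (¬ i.val = j.val ∧ mi = mj) := by
    rw [dvd_iff_aux (4 * N) (by omega) (d + 2 * N) (by omega) (by omega)]; omega
  have hc4 : (((4 * N : ℕ) : ℤ) ∣ d - 2 * N) ↔ (¬ i.val = j.val ∧ mi = mj) := by
    rw [dvd_iff_aux (4 * N) (by omega) (d - 2 * N) (by omega) (by omega)]; omega
  simp only [hc1, hc2, hc0, hc3, hc4, hai, haj, hmi, hmj, Fin.ext_iff]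
  have hsplitA : (if ai = j.val ∨ aj = i.val then (1:ℝ) else 0)
      = (if ai = j.val then (1:ℝ) else 0) + (if aj = i.val then (1:ℝ) else 0) := by
    split_ifs <;> first | (exfalso; omega) | (push_cast; ring)
  have hsplitD : (if i.val = j.val then (1:ℝ) else if mi = mj then fCE N else 0)
      = (if i.val = j.val then (1:ℝ) else 0)
        + (if ¬ i.val = j.val ∧ mi = mj then fCE N else 0) := by
    split_ifs <;> first | (exfalso; omega) | (push_cast; ring)
  rw [hsplitA, hsplitD]
  split_ifs <;> first | (exfalso; omega) | (push_cast; ring)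

set_option maxHeartbeats 1000000 in
lemma quadCE (N : ℕ) (hN : 2 ≤ N) (v : Fin (4 * N) → ℝ) (a : ℝ) :
    0 ≤ (N : ℝ) / lCE N * a ^ 2 - 2 * a * (∑ i, v i)
      + ∑ i, ∑ j, v i * Ment N i j * v j := by
  have hN1 : 1 ≤ N := by omega
  have hl := lCE_pos N hN1
  have hNR : (0 : ℝ) < N := by exact_mod_cast Nat.pos_of_ne_zero (by omega)
  have h4N : (0 : ℝ) < ((4 * N : ℕ) : ℝ) := by
    have : 0 < 4 * N := by omega
    exact_mod_cast this
  set c : ℕ → ℝ := fun m => ∑ i, v i * Real.cos (bCE N * (m * (i.val : ℝ))) with hcdef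
  set s : ℕ → ℝ := fun m => ∑ i, v i * Real.sin (bCE N * (m * (i.val : ℝ))) with hsdef
  have expand : ∀ m : ℕ, c m ^ 2 + s m ^ 2
      = ∑ i, ∑ j, v i * v j
          * Real.cos (bCE N * (m * (((i.val : ℤ) - (j.val : ℤ) : ℤ) : ℝ))) := by
    intro m
    rw [hcdef, hsdef]
    simp only
    rw [sq, sq, Finset.sum_mul_sum, Finset.sum_mul_sum, ← Finset.sum_add_distrib]
    refine Finset.sum_congr rfl fun i _ => ?_
    rw [← Finset.sum_add_distrib]
    refine Finset.sum_congr rfl fun j _ => ?_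
    have harg : bCE N * (m * (((i.val : ℤ) - (j.val : ℤ) : ℤ) : ℝ))
        = bCE N * (m * (i.val : ℝ)) - bCE N * (m * (j.val : ℝ)) := by push_cast; ring
    rw [harg, Real.cos_sub]
    ring
  set T : ℝ := ∑ m ∈ Finset.range (4 * N), lamCE N m * (c m ^ 2 + s m ^ 2) with hTdef
  set Q : ℝ := ∑ i, ∑ j, v i * Ment N i j * v j with hQdef
  set Sv : ℝ := ∑ i, v i with hSvdef
  have Isum : T = ((4 * N : ℕ) : ℝ) * Q := by
    rw [hTdef, hQdef]
    calc ∑ m ∈ Finset.range (4 * N), lamCE N m * (c m ^ 2 + s m ^ 2)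
        = ∑ m ∈ Finset.range (4 * N), ∑ i, ∑ j, lamCE N m * (v i * v j
            * Real.cos (bCE N * (m * (((i.val : ℤ) - (j.val : ℤ) : ℤ) : ℝ)))) := by
          refine Finset.sum_congr rfl fun m _ => ?_
          rw [expand m, Finset.mul_sum]
          exact Finset.sum_congr rfl fun i _ => by rw [Finset.mul_sum]
      _ = ∑ i, ∑ m ∈ Finset.range (4 * N), ∑ j, lamCE N m * (v i * v j
            * Real.cos (bCE N * (m * (((i.val : ℤ) - (j.val : ℤ) : ℤ) : ℝ)))) :=
          Finset.sum_comm
      _ = ∑ i, ∑ j, ∑ m ∈ Finset.range (4 * N), lamCE N m * (v i * v j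
            * Real.cos (bCE N * (m * (((i.val : ℤ) - (j.val : ℤ) : ℤ) : ℝ)))) :=
          Finset.sum_congr rfl fun i _ => Finset.sum_comm
      _ = ∑ i, ∑ j, v i * v j * (((4 * N : ℕ) : ℝ) * Ment N i j) := by
          refine Finset.sum_congr rfl fun i _ => Finset.sum_congr rfl fun j _ => ?_
          have hfac : ∑ m ∈ Finset.range (4 * N), lamCE N m * (v i * v j
              * Real.cos (bCE N * (m * (((i.val : ℤ) - (j.val : ℤ) : ℤ) : ℝ))))
              = v i * v j * ∑ m ∈ Finset.range (4 * N), lamCE N m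
                  * Real.cos (bCE N * (m * (((i.val : ℤ) - (j.val : ℤ) : ℤ) : ℝ))) := by
            rw [Finset.mul_sum]
            exact Finset.sum_congr rfl fun m _ => by ring
          rw [hfac, keyCE N hN i j]
      _ = ((4 * N : ℕ) : ℝ) * ∑ i, ∑ j, v i * Ment N i j * v j := by
          rw [Finset.mul_sum]
          refine Finset.sum_congr rfl fun i _ => ?_
          rw [Finset.mul_sum]
          exact Finset.sum_congr rfl fun j _ => by ring
  have hc0 : c 0 = Sv := by
    rw [hcdef, hSvdef]
    simp
  have hs0 : s 0 = 0 := by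
    rw [hsdef]
    simp
  have hlam0 : lamCE N 0 = 4 * lCE N := by
    have h1 := one_add_fCE N hN1
    rw [lamCE]
    norm_num
    linarith
  have hbound : 4 * lCE N * Sv ^ 2 ≤ T := by
    have h0 : lamCE N 0 * (c 0 ^ 2 + s 0 ^ 2) ≤ T := by
      rw [hTdef]
      refine Finset.single_le_sum (f := fun m => lamCE N m * (c m ^ 2 + s m ^ 2))
        (fun m hm => mul_nonneg (lamCE_nonneg N hN1 m (Finset.mem_range.mp hm)) (by positivity))
        (Finset.mem_range.mpr (by omega))
    calc 4 * lCE N * Sv ^ 2 = lamCE N 0 * (c 0 ^ 2 + s 0 ^ 2) := by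
          rw [hlam0, hc0, hs0]; ring
      _ ≤ T := h0
  have hQT : Q = T / ((4 * N : ℕ) : ℝ) := by
    rw [Isum]
    field_simp
  have iden : (N : ℝ) / lCE N * a ^ 2 - 2 * a * Sv + Q
      = lCE N / (N : ℝ) * (Sv - (N : ℝ) / lCE N * a) ^ 2
        + (T - 4 * lCE N * Sv ^ 2) / ((4 * N : ℕ) : ℝ) := by
    rw [hQT]
    have h4 : ((4 * N : ℕ) : ℝ) = 4 * (N : ℝ) := by push_cast; ring
    rw [h4]
    field_simp
    ring
  rw [iden]
  have t1 : 0 ≤ lCE N / (N : ℝ) * (Sv - (N : ℝ) / lCE N * a) ^ 2 := by positivity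
  have t2 : 0 ≤ (T - 4 * lCE N * Sv ^ 2) / ((4 * N : ℕ) : ℝ) :=
    div_nonneg (by linarith) h4N.le
  linarith

lemma Ment_symm (N : ℕ) (i j : Fin (4 * N)) : Ment N j i = Ment N i j := by
  rw [Ment, Ment]
  congr 1
  · have h1 : ((j.val + 1) % (4 * N) = i.val ∨ (i.val + 1) % (4 * N) = j.val) ↔
        ((i.val + 1) % (4 * N) = j.val ∨ (j.val + 1) % (4 * N) = i.val) := or_comm
    simp only [h1]
  · by_cases h : i = j
    · subst h; rfl
    · rw [if_neg h, if_neg (fun hh => h hh.symm)]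
      by_cases h2 : i.val % (2 * N) = j.val % (2 * N)
      · rw [if_pos h2, if_pos h2.symm]
      · rw [if_neg h2, if_neg (fun hh => h2 hh.symm)]

theorem ZN_star_posSemidef (N : ℕ) (hN : 2 ≤ N) :
    let k : ℝ := Real.cos (Real.pi / (2 * N))
    let f : ℝ := (1 - k) / (1 + k)
    let l : ℝ := 1 / (1 + k)
    let A : Matrix (Fin (4 * N)) (Fin (4 * N)) ℝ := fun i j =>
      if (i.val + 1) % (4 * N) = j.val ∨ (j.val + 1) % (4 * N) = i.val then 1 else 0
    let D : Matrix (Fin (4 * N)) (Fin (4 * N)) ℝ := fun i j =>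
      if i = j then 1 else if i.val % (2 * N) = j.val % (2 * N) then f else 0
    let M : Matrix (Fin (4 * N)) (Fin (4 * N)) ℝ := l • A + D
    let Z : Matrix (Fin 1 ⊕ Fin (4 * N)) (Fin 1 ⊕ Fin (4 * N)) ℝ :=
      Matrix.fromBlocks (fun _ _ => (N : ℝ) / l) (fun _ _ => -1) (fun _ _ => -1) M
    Z.PosSemidef := by
  intro k f l A D M Z
  have hMent : ∀ i j, M i j = Ment N i j := fun i j => rfl
  have hlM : l = lCE N := rfl
  rw [Matrix.posSemidef_iff_dotProduct_mulVec]
  constructor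
  · show Z.conjTranspose = Z
    ext p q
    rcases p with p | i <;> rcases q with q | j <;>
      simp only [Matrix.conjTranspose_apply, Matrix.fromBlocks_apply₁₁,
        Matrix.fromBlocks_apply₁₂, Matrix.fromBlocks_apply₂₁, Matrix.fromBlocks_apply₂₂,
        star_trivial, Z, Matrix.fromBlocks, Matrix.of_apply, Sum.elim_inl, Sum.elim_inr]
    rw [hMent, hMent]
    exact Ment_symm N i j
  · intro x
    have hsx : star x = x := funext fun p => star_trivial _
    set a : ℝ := x (Sum.inl 0) with hadef
    set v : Fin (4 * N) → ℝ := fun i => x (Sum.inr i) with hvdef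
    have hdot : dotProduct (star x) (Z.mulVec x)
        = (N : ℝ) / l * a ^ 2 - 2 * a * (∑ i, v i) + ∑ i, ∑ j, v i * M i j * v j := by
      rw [hsx]
      rw [dotProduct]
      rw [Fintype.sum_sum_type]
      simp only [Z, Matrix.mulVec, dotProduct, Fintype.sum_sum_type, Matrix.fromBlocks,
        Matrix.of_apply, Sum.elim_inl, Sum.elim_inr,
        Matrix.fromBlocks_apply₁₁, Matrix.fromBlocks_apply₁₂, Matrix.fromBlocks_apply₂₁,
        Matrix.fromBlocks_apply₂₂, Fin.sum_univ_one]
      have e2 : ∀ i, x (Sum.inr i) * ((-1) * x (Sum.inl 0) + ∑ j, M i j * x (Sum.inr j))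
          = (-a) * v i + v i * ∑ j, M i j * v j := by
        intro i
        rw [hadef, hvdef]
        ring
      rw [Finset.sum_congr rfl fun i _ => e2 i, Finset.sum_add_distrib, ← Finset.mul_sum]
      have e3 : ∀ i, v i * ∑ j, M i j * v j = ∑ j, v i * M i j * v j := by
        intro i
        rw [Finset.mul_sum]
        exact Finset.sum_congr rfl fun j _ => by ring
      rw [Finset.sum_congr rfl fun i _ => e3 i]
      rw [← hadef]
      have e4 : ∑ i : Fin (4 * N), x (Sum.inr i) = ∑ i, v i := rfl
      rw [e4, ← Finset.mul_sum]
      ring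
    rw [hdot, hlM]
    have : ∑ i, ∑ j, v i * M i j * v j = ∑ i, ∑ j, v i * Ment N i j * v j :=
      Finset.sum_congr rfl fun i _ => Finset.sum_congr rfl fun j _ => by rw [hMent]
    rw [this]
    exact quadCE N hN v a
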